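/- Let A be an artin algebra and X an indecomposable non-projective A-module with pd_A X ≥ 2. Then Hom_A(D(A), τ_A X) ≠ 0, where τ_A is the Auslander-Reiten translate and D(A) the minimal injective cogenerator. -/

import Mathlib

universe u

variable {A : Type u} [Ring A]

/-- The category of (right) `A`-modules, modeled as modules over `Aᵐᵒᵖ`. -/
abbrev Modc (A : Type u) [Ring A] := ModuleCat.{u} Aᵐᵒᵖ

/-- A module is finitely generated. -/
def FinGen (M : Modc A) : Prop := Module.Finite Aᵐᵒᵖ M

/-- A module is indecomposable: nonzero, and its endomorphism ring has no
nontrivial idempotents. -/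
def Indec (M : Modc A) : Prop :=
  Nontrivial M ∧ ∀ e : M →ₗ[Aᵐᵒᵖ] M, e ∘ₗ e = e → e = 0 ∨ e = LinearMap.id

def IsSplitMono {M N : Modc A} (f : M →ₗ[Aᵐᵒᵖ] N) : Prop :=
  ∃ g : N →ₗ[Aᵐᵒᵖ] M, g ∘ₗ f = LinearMap.id

def IsSplitEpi {M N : Modc A} (f : M →ₗ[Aᵐᵒᵖ] N) : Prop :=
  ∃ g : N →ₗ[Aᵐᵒᵖ] M, f ∘ₗ g = LinearMap.id

/-- An irreducible morphism between modules. -/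
def IsIrred {M N : Modc A} (f : M →ₗ[Aᵐᵒᵖ] N) : Prop :=
  ¬ IsSplitMono f ∧ ¬ IsSplitEpi f ∧
  ∀ (L : Modc A) (g : M →ₗ[Aᵐᵒᵖ] L) (h : L →ₗ[Aᵐᵒᵖ] N),
    h ∘ₗ g = f → IsSplitEpi h ∨ IsSplitMono g

/-- Neighbors in the Auslander-Reiten quiver: both finitely generated
indecomposable, and isomorphic or linked by an irreducible map. -/
def Neighbor (X Y : Modc A) : Prop :=
  FinGen X ∧ FinGen Y ∧ Indec X ∧ Indec Y ∧
  (Nonempty (X ≃ₗ[Aᵐᵒᵖ] Y) ∨ (∃ f : X →ₗ[Aᵐᵒᵖ] Y, IsIrred f) ∨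
    (∃ f : Y →ₗ[Aᵐᵒᵖ] X, IsIrred f))

/-- A component of the Auslander-Reiten quiver `Γ_A`, viewed as the class of
indecomposable finitely generated modules lying in it. -/
def IsARComponent (C : Set (Modc A)) : Prop :=
  C.Nonempty ∧ (∀ X ∈ C, FinGen X ∧ Indec X) ∧
  (∀ X ∈ C, ∀ Y : Modc A, Neighbor X Y → Y ∈ C) ∧
  (∀ X ∈ C, ∀ Y ∈ C, Relation.ReflTransGen Neighbor X Y)

/-- The annihilator of a class of modules. -/
def annSet (C : Set (Modc A)) : Set A :=
  {a | ∀ X ∈ C, ∀ x : X, MulOpposite.op a • x = 0}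

/-- The annihilator of a single module. -/
def annM (M : Modc A) : Set A := {a | ∀ x : M, MulOpposite.op a • x = 0}

/-- Membership in `add C`: isomorphic to a finite direct sum of modules in `C`. -/
def InAdd (C : Set (Modc A)) (M : Modc A) : Prop :=
  ∃ (k : ℕ) (F : Fin k → Modc A), (∀ i, F i ∈ C) ∧
    Nonempty (M ≃ₗ[Aᵐᵒᵖ] ((i : Fin k) → F i))

/-- An external short path of `C`: nonzero non-isomorphisms `X → Y → Z` between
indecomposables with `X, Z ∈ C` and `Y ∉ C`. -/
def HasExtShortPath (C : Set (Modc A)) : Prop :=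
  ∃ X Y Z : Modc A, X ∈ C ∧ Z ∈ C ∧ Y ∉ C ∧ FinGen Y ∧ Indec Y ∧
    (∃ f : X →ₗ[Aᵐᵒᵖ] Y, f ≠ 0 ∧ ¬ Function.Bijective f) ∧
    (∃ g : Y →ₗ[Aᵐᵒᵖ] Z, g ≠ 0 ∧ ¬ Function.Bijective g)

/-- Projective dimension at most one. -/
def PdLE1 (X : Modc A) : Prop :=
  ∃ (P₁ P₀ : Modc A) (f : P₁ →ₗ[Aᵐᵒᵖ] P₀) (g : P₀ →ₗ[Aᵐᵒᵖ] X),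
    Module.Projective Aᵐᵒᵖ P₁ ∧ Module.Projective Aᵐᵒᵖ P₀ ∧
    Function.Injective f ∧ Function.Surjective g ∧
    LinearMap.range f = LinearMap.ker g

/-- Projective dimension at most two. -/
def PdLE2 (X : Modc A) : Prop :=
  ∃ (P₂ P₁ P₀ : Modc A) (f : P₂ →ₗ[Aᵐᵒᵖ] P₁) (g : P₁ →ₗ[Aᵐᵒᵖ] P₀)
    (h : P₀ →ₗ[Aᵐᵒᵖ] X),
    Module.Projective Aᵐᵒᵖ P₂ ∧ Module.Projective Aᵐᵒᵖ P₁ ∧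
    Module.Projective Aᵐᵒᵖ P₀ ∧
    Function.Injective f ∧ Function.Surjective h ∧
    LinearMap.range f = LinearMap.ker g ∧ LinearMap.range g = LinearMap.ker h

/-- Injective dimension at most one. -/
def IdLE1 (X : Modc A) : Prop :=
  ∃ (I₀ I₁ : Modc A) (f : X →ₗ[Aᵐᵒᵖ] I₀) (g : I₀ →ₗ[Aᵐᵒᵖ] I₁),
    Module.Injective Aᵐᵒᵖ I₀ ∧ Module.Injective Aᵐᵒᵖ I₁ ∧
    Function.Injective f ∧ Function.Surjective g ∧
    LinearMap.range f = LinearMap.ker g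

/-- An almost split (Auslander-Reiten) sequence `0 → T → E → X → 0`; then
`T = τ_A X` and `X = τ_A⁻ T`. -/
def IsAlmostSplitSeq (T E X : Modc A) (f : T →ₗ[Aᵐᵒᵖ] E) (g : E →ₗ[Aᵐᵒᵖ] X) : Prop :=
  Function.Injective f ∧ Function.Surjective g ∧
  LinearMap.range f = LinearMap.ker g ∧
  Indec T ∧ Indec X ∧ ¬ IsSplitEpi g ∧
  (∀ (V : Modc A) (h : V →ₗ[Aᵐᵒᵖ] X), ¬ IsSplitEpi h → ∃ k : V →ₗ[Aᵐᵒᵖ] E, g ∘ₗ k = h) ∧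
  (∀ (V : Modc A) (h : T →ₗ[Aᵐᵒᵖ] V), ¬ IsSplitMono h → ∃ k : E →ₗ[Aᵐᵒᵖ] V, k ∘ₗ f = h)

/-- A generator of the radical of `mod A`: a map factoring through a
non-isomorphism between finitely generated indecomposables. -/
def IsNonIsoGen {X Y : Modc A} (f : X →ₗ[Aᵐᵒᵖ] Y) : Prop :=
  ∃ (M N : Modc A) (u : M →ₗ[Aᵐᵒᵖ] N) (g : X →ₗ[Aᵐᵒᵖ] M) (h : N →ₗ[Aᵐᵒᵖ] Y),
    FinGen M ∧ Indec M ∧ FinGen N ∧ Indec N ∧ ¬ Function.Bijective u ∧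
    f = h ∘ₗ (u ∘ₗ g)

/-- The radical `rad_A(X, Y)`: the ideal of `mod A` generated by all
non-isomorphisms between indecomposables. -/
def rad1 (X Y : Modc A) : AddSubgroup (X →ₗ[Aᵐᵒᵖ] Y) :=
  AddSubgroup.closure {f | IsNonIsoGen f}

/-- Powers of the radical: `radPow n = rad_A^(n+1)`. -/
def radPow : ℕ → (X Y : Modc A) → AddSubgroup (X →ₗ[Aᵐᵒᵖ] Y)
  | 0 => rad1
  | n + 1 => fun X Y => AddSubgroup.closure
      {f | ∃ (Z : Modc A) (g : X →ₗ[Aᵐᵒᵖ] Z) (h : Z →ₗ[Aᵐᵒᵖ] Y),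
        FinGen Z ∧ g ∈ radPow n X Z ∧ h ∈ rad1 Z Y ∧ f = h ∘ₗ g}

/-- The infinite radical `rad_A^∞(X, Y) = ⋂_{i ≥ 1} rad_A^i(X, Y)`. -/
def radInf (X Y : Modc A) : AddSubgroup (X →ₗ[Aᵐᵒᵖ] Y) := ⨅ n : ℕ, radPow n X Y

/-- `X` is (isomorphic to) a direct summand of `M`. -/
def IsDirectSummandOf (X M : Modc A) : Prop :=
  ∃ (ι : X →ₗ[Aᵐᵒᵖ] M) (ρ : M →ₗ[Aᵐᵒᵖ] X), ρ ∘ₗ ι = LinearMap.id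



/-- A finitely generated injective cogenerator, playing the role of the minimal
injective cogenerator `D(A)` of `mod A`. -/
def IsInjCogen {A : Type u} [Ring A] (DA : Modc A) : Prop :=
  FinGen DA ∧ Module.Injective Aᵐᵒᵖ DA ∧
  ∀ X : Modc A, FinGen X →
    ∃ (t : ℕ) (f : X →ₗ[Aᵐᵒᵖ] (Fin t → DA)), Function.Injective f

section AuxLemmas

/-- Factor a linear map through a surjection whose kernel it kills. -/
theorem aux_exists_factor {R₀ : Type*} [Ring R₀] {M N P : Type*}
    [AddCommGroup M] [AddCommGroup N] [AddCommGroup P]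
    [Module R₀ M] [Module R₀ N] [Module R₀ P]
    (q : M →ₗ[R₀] N) (hq : Function.Surjective q) (k : M →ₗ[R₀] P)
    (hk : ∀ m, q m = 0 → k m = 0) : ∃ w : N →ₗ[R₀] P, ∀ m, w (q m) = k m := by
  have hcongr : ∀ m m', q m = q m' → k m = k m' := by
    intro m m' h
    have h1 : k (m - m') = 0 := hk _ (by rw [map_sub, h, sub_self])
    rw [map_sub] at h1
    exact sub_eq_zero.mp h1
  refine ⟨{ toFun := fun nn => k (hq nn).choose
            map_add' := ?_
            map_smul' := ?_ }, ?_⟩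
  · intro a b
    have h2 : k ((hq (a + b)).choose) = k ((hq a).choose + (hq b).choose) :=
      hcongr _ _ (by rw [map_add, (hq a).choose_spec, (hq b).choose_spec,
        (hq (a + b)).choose_spec])
    simp only [h2, map_add]
  · intro r a
    have h2 : k ((hq (r • a)).choose) = k (r • (hq a).choose) :=
      hcongr _ _ (by rw [map_smul, (hq a).choose_spec, (hq (r • a)).choose_spec])
    simp only [h2, map_smul, RingHom.id_apply]
  · intro m
    exact hcongr _ _ (hq (q m)).choose_spec

/-- Corestrict a linear map through an injection whose range contains its image. -/
theorem aux_exists_comp_inv {R₀ : Type*} [Ring R₀] {M N P : Type*}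
    [AddCommGroup M] [AddCommGroup N] [AddCommGroup P]
    [Module R₀ M] [Module R₀ N] [Module R₀ P]
    (f : M →ₗ[R₀] N) (hf : Function.Injective f) (l : P →ₗ[R₀] N)
    (hl : ∀ c, ∃ m, f m = l c) : ∃ t : P →ₗ[R₀] M, ∀ c, f (t c) = l c := by
  refine ⟨{ toFun := fun c => (hl c).choose
            map_add' := ?_
            map_smul' := ?_ }, fun c => (hl c).choose_spec⟩
  · intro a b
    apply hf
    rw [map_add f, (hl a).choose_spec, (hl b).choose_spec, (hl (a + b)).choose_spec, map_add]
  · intro r a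
    apply hf
    simp only [RingHom.id_apply]
    rw [(hl (r • a)).choose_spec, map_smul, map_smul, (hl a).choose_spec]

/-- A finite product of copies of an injective module is injective. -/
theorem aux_injective_pi {R₀ : Type u} [Ring R₀] {Q : Type u} [AddCommGroup Q] [Module R₀ Q]
    (hQ : Module.Injective R₀ Q) (t : ℕ) : Module.Injective R₀ (Fin t → Q) := by
  constructor
  intro X Y _ _ _ _ fm hfm gm
  choose h hh using fun i : Fin t => hQ.out fm hfm ((LinearMap.proj i).comp gm)
  exact ⟨LinearMap.pi h, fun x => funext fun i => hh i x⟩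

/-- If all maps `Q → T` vanish then all maps from a finite power of `Q` to `T` vanish. -/
theorem aux_pi_hom_zero {R₀ : Type*} [Ring R₀] {Q T' : Type*} [AddCommGroup Q] [Module R₀ Q]
    [AddCommGroup T'] [Module R₀ T'] (h : ∀ φ : Q →ₗ[R₀] T', φ = 0)
    {t : ℕ} (w : (Fin t → Q) →ₗ[R₀] T') : ∀ x, w x = 0 := by
  intro x
  have hx : x = ∑ i, Pi.single i (x i) := (Finset.univ_sum_single x).symm
  rw [hx, map_sum]
  refine Finset.sum_eq_zero fun i _ => ?_
  have h0 : w.comp (LinearMap.single R₀ (fun _ : Fin t => Q) i) = 0 := h _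
  have := LinearMap.ext_iff.mp h0 (x i)
  simpa using this

/-- A layer annihilated by the Jacobson radical over a commutative artinian ring is
noetherian if it is artinian (it is a semisimple module). -/
theorem aux_layer_noetherian {K₀ : Type*} [CommRing K₀] [IsArtinianRing K₀]
    {L : Type*} [AddCommGroup L] [Module K₀ L] [IsArtinian K₀ L]
    (hT : Module.IsTorsionBySet K₀ L ((⊥ : Ideal K₀).jacobson : Set K₀)) :
    IsNoetherian K₀ L := by
  letI : Module (K₀ ⧸ (⊥ : Ideal K₀).jacobson) L := hT.module
  haveI : IsReduced (K₀ ⧸ (⊥ : Ideal K₀).jacobson) :=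
    (Ideal.isRadical_iff_quotient_reduced _).mp (Ideal.isRadical_jacobson _)
  haveI : IsSemisimpleRing (K₀ ⧸ (⊥ : Ideal K₀).jacobson) :=
    IsArtinianRing.isSemisimpleRing_of_isReduced _
  let l : L →ₛₗ[Ideal.Quotient.mk ((⊥ : Ideal K₀).jacobson)] L :=
    { toFun := id
      map_add' := fun _ _ => rfl
      map_smul' := fun r x => (hT.mk_smul r x).symm }
  haveI : IsSemisimpleModule K₀ L :=
    (l.isSemisimpleModule_iff_of_bijective Function.bijective_id).mpr inferInstance
  exact (IsSemisimpleModule.finite_tfae.out 2 1).mp ‹IsArtinian K₀ L›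

/-- Hopkins–Levitzki: an artinian module over a commutative artinian ring is noetherian. -/
theorem aux_artinian_noetherian (K₀ : Type*) [CommRing K₀] [IsArtinianRing K₀]
    (M : Type v) [AddCommGroup M] [Module K₀ M] [IsArtinian K₀ M] : IsNoetherian K₀ M := by
  obtain ⟨n, hn⟩ := IsArtinianRing.isNilpotent_jacobson_bot (R := K₀)
  suffices H : ∀ (i : ℕ) (N : Type v) (_ : AddCommGroup N) (_ : Module K₀ N)
      (_ : IsArtinian K₀ N),
      ((⊥ : Ideal K₀).jacobson ^ i • (⊤ : Submodule K₀ N) = ⊥) → IsNoetherian K₀ N by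
    refine H n M inferInstance inferInstance inferInstance ?_
    rw [hn, Ideal.zero_eq_bot, Submodule.bot_smul]
  intro i
  induction i with
  | zero =>
    intro N _ _ _ h0
    rw [pow_zero, Ideal.one_eq_top, Submodule.top_smul] at h0
    haveI : Subsingleton N := by
      constructor
      intro a b
      have ha : a ∈ (⊥ : Submodule K₀ N) := h0 ▸ Submodule.mem_top
      have hb : b ∈ (⊥ : Submodule K₀ N) := h0 ▸ Submodule.mem_top
      rw [Submodule.mem_bot] at ha hb
      rw [ha, hb]
    infer_instance
  | succ i ih =>
    intro N _ _ _ h0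
    set J := (⊥ : Ideal K₀).jacobson with hJ
    set W : Submodule K₀ N := J • (⊤ : Submodule K₀ N) with hW
    haveI hNoethW : IsNoetherian K₀ ↥W := by
      refine ih ↥W _ _ inferInstance ?_
      apply Submodule.map_injective_of_injective W.injective_subtype
      rw [Submodule.map_smul'', Submodule.map_top, Submodule.range_subtype, Submodule.map_bot]
      rw [hW, ← mul_smul, ← pow_succ]
      exact h0
    have hTor : Module.IsTorsionBySet K₀ (N ⧸ W) (J : Set K₀) := by
      intro x a
      obtain ⟨y, rfl⟩ := Submodule.Quotient.mk_surjective W x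
      rw [← Submodule.Quotient.mk_smul, Submodule.Quotient.mk_eq_zero]
      exact Submodule.smul_mem_smul a.2 Submodule.mem_top
    haveI hNoethQ : IsNoetherian K₀ (N ⧸ W) := aux_layer_noetherian hTor
    exact isNoetherian_of_range_eq_ker W.subtype W.mkQ
      (by rw [Submodule.range_subtype, Submodule.ker_mkQ])

/-- Cokernel package: a quotient presented abstractly. -/
theorem aux_coker {R : Type u} [Ring R] {M : Type u} [AddCommGroup M] [Module R M]
    (S : Submodule R M) :
    ∃ (C : Type u) (_ : AddCommGroup C) (_ : Module R C) (πC : M →ₗ[R] C),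
      Function.Surjective πC ∧ ∀ x, πC x = 0 ↔ x ∈ S :=
  ⟨M ⧸ S, inferInstance, inferInstance, S.mkQ, S.mkQ_surjective, fun x => by
    rw [Submodule.mkQ_apply, Submodule.Quotient.mk_eq_zero]⟩

/-- Pushout package: the pushout of `K → F` (the kernel of `p`) along a map to `C`,
presented abstractly with all the properties we need. -/
theorem aux_pushout {R : Type u} [Ring R] {F K C Xx : Type u}
    [AddCommGroup F] [AddCommGroup K] [AddCommGroup C] [AddCommGroup Xx]
    [Module R F] [Module R K] [Module R C] [Module R Xx]
    (p : F →ₗ[R] Xx) (i : K →ₗ[R] F) (hiinj : Function.Injective i)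
    (hikerp : ∀ x : F, p x = 0 ↔ ∃ k, i k = x)
    {G : Type u} [AddCommGroup G] [Module R G]
    (π : G →ₗ[R] K) (hπ : Function.Surjective π)
    (φm : G →ₗ[R] C) (hφm0 : ∀ gg, π gg = 0 → φm gg = 0) :
    ∃ (V : Type u) (_ : AddCommGroup V) (_ : Module R V)
      (jC : C →ₗ[R] V) (jF : F →ₗ[R] V) (qV : V →ₗ[R] Xx),
      (∀ v, qV (jF v) = p v) ∧ (∀ c, qV (jC c) = 0) ∧ Function.Injective jC ∧
      (∀ v, qV v = 0 → ∃ c, jC c = v) ∧ (∀ gg, jF (i (π gg)) = jC (φm gg)) := by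
  classical
  set θ : G →ₗ[R] C × F := LinearMap.prod φm (-(i ∘ₗ π)) with hθ
  have hθap : ∀ gg, θ gg = (φm gg, -(i (π gg))) := fun gg => rfl
  have hθker : LinearMap.range θ ≤ LinearMap.ker (LinearMap.coprod 0 p) := by
    rintro z ⟨gg, rfl⟩
    rw [LinearMap.mem_ker, hθap, LinearMap.coprod_apply]
    have h1 : p (i (π gg)) = 0 := (hikerp _).mpr ⟨π gg, rfl⟩
    simp [h1]
  refine ⟨(C × F) ⧸ LinearMap.range θ, inferInstance, inferInstance,
    (LinearMap.range θ).mkQ ∘ₗ LinearMap.inl R C F,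
    (LinearMap.range θ).mkQ ∘ₗ LinearMap.inr R C F,
    Submodule.liftQ _ (LinearMap.coprod 0 p) hθker, ?_, ?_, ?_, ?_, ?_⟩
  · intro v
    rw [LinearMap.comp_apply, Submodule.mkQ_apply, Submodule.liftQ_apply]
    simp
  · intro c
    rw [LinearMap.comp_apply, Submodule.mkQ_apply, Submodule.liftQ_apply]
    simp
  · intro c c' hcc
    rw [LinearMap.comp_apply, LinearMap.comp_apply, Submodule.mkQ_apply,
      Submodule.mkQ_apply] at hcc
    have h1 : ((LinearMap.inl R C F) c) - ((LinearMap.inl R C F) c')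
        ∈ LinearMap.range θ := (Submodule.Quotient.eq _).mp hcc
    obtain ⟨gg, hgg⟩ := h1
    rw [hθap] at hgg
    have h2 : φm gg = c - c' := by
      have := congrArg Prod.fst hgg
      simpa using this
    have h4 : i (π gg) = 0 := by
      have h3 := congrArg Prod.snd hgg
      simp only [LinearMap.inl_apply, Prod.snd_sub, sub_zero] at h3
      simpa using h3.symm
    have h5 : π gg = 0 := hiinj (by rw [h4, map_zero])
    rw [hφm0 gg h5] at h2
    exact sub_eq_zero.mp h2.symm
  · intro v hv
    obtain ⟨⟨c, w⟩, rfl⟩ := Submodule.Quotient.mk_surjective _ v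
    have hpw : p w = 0 := by
      rw [Submodule.liftQ_apply] at hv
      simpa using hv
    obtain ⟨k, hk⟩ := (hikerp w).mp hpw
    obtain ⟨gg, hgg⟩ := hπ k
    refine ⟨c + φm gg, ?_⟩
    rw [LinearMap.comp_apply, Submodule.mkQ_apply, Submodule.Quotient.eq]
    refine ⟨gg, ?_⟩
    rw [hθap, hgg, hk]
    ext
    · simp
    · simp
  · intro gg
    rw [LinearMap.comp_apply, LinearMap.comp_apply, Submodule.mkQ_apply,
      Submodule.mkQ_apply, Submodule.Quotient.eq]
    refine ⟨-gg, ?_⟩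
    rw [map_neg, hθap]
    ext
    · simp
    · simp

/-- The key construction: under the hypotheses of the main theorem, if all maps from the
injective cogenerator to `T` vanish, then `X` has a projective first syzygy. -/
theorem aux_main {R : Type u} [Ring R] [IsNoetherianRing R]
    {Tt Ee Xx Q : Type u} [AddCommGroup Tt] [AddCommGroup Ee] [AddCommGroup Xx] [AddCommGroup Q]
    [Module R Tt] [Module R Ee] [Module R Xx] [Module R Q]
    [Module.Finite R Xx] (hQ : Module.Injective R Q)
    (f : Tt →ₗ[R] Ee) (g : Ee →ₗ[R] Xx)
    (hfinj : Function.Injective f) (hexact : LinearMap.range f = LinearMap.ker g)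
    (hgns : ¬ ∃ s : Xx →ₗ[R] Ee, g ∘ₗ s = LinearMap.id)
    (h7 : ∀ (V : Type u) (_ : AddCommGroup V) (_ : Module R V) (h : V →ₗ[R] Xx),
      (¬ ∃ s : Xx →ₗ[R] V, h ∘ₗ s = LinearMap.id) → ∃ k : V →ₗ[R] Ee, g ∘ₗ k = h)
    (hcog : ∀ (M : Type u) (_ : AddCommGroup M) (_ : Module R M), Module.Finite R M →
      ∃ (t : ℕ) (e : M →ₗ[R] (Fin t → Q)), Function.Injective e)
    (hzero : ∀ w : Q →ₗ[R] Tt, w = 0) :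
    ∃ (n : ℕ) (p : (Fin n → R) →ₗ[R] Xx), Function.Surjective p ∧
      Module.Projective R ↥(LinearMap.ker p) := by
  classical
  -- free cover of X
  obtain ⟨n, p, hp⟩ := Module.Finite.exists_fin' R Xx
  refine ⟨n, p, hp, ?_⟩
  haveI : Module.Finite R ↥(LinearMap.ker p) :=
    Module.Finite.iff_fg.mpr (IsNoetherian.noetherian _)
  -- free cover of the syzygy
  obtain ⟨m, π, hπ⟩ := Module.Finite.exists_fin' R ↥(LinearMap.ker p)
  haveI : Module.Finite R ↥(LinearMap.ker π) :=
    Module.Finite.iff_fg.mpr (IsNoetherian.noetherian _)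
  -- embed the second syzygy into a finite power of Q
  obtain ⟨t, ε, hε⟩ := hcog ↥(LinearMap.ker π) _ _ ‹_›
  -- extend along the inclusion into the free module, using injectivity of `Fin t → Q`
  obtain ⟨ψ, hψ⟩ := (aux_injective_pi hQ t).out (LinearMap.ker π).subtype
    (Submodule.injective_subtype _) ε
  -- the cokernel of ε, abstractly
  obtain ⟨C, _, _, πC, hπCsurj, hπCker⟩ := aux_coker (LinearMap.range ε)
  -- the pushout, abstractly
  have hikerp : ∀ x : Fin n → R, p x = 0 ↔ ∃ k, (LinearMap.ker p).subtype k = x := by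
    intro x
    constructor
    · intro hx
      exact ⟨⟨x, hx⟩, rfl⟩
    · rintro ⟨k, rfl⟩
      exact k.2
  have hφm0 : ∀ gg, π gg = 0 → (πC ∘ₗ ψ) gg = 0 := by
    intro gg hgg
    have h6 : gg ∈ LinearMap.ker π := hgg
    have h1 : gg = (LinearMap.ker π).subtype ⟨gg, h6⟩ := rfl
    rw [LinearMap.comp_apply, h1, hψ, hπCker]
    exact ⟨_, rfl⟩
  obtain ⟨V, _, _, jC, jF, qV, h_qV_jF, h_qV_jC, h_jC_inj, h_ker_sub, h_push⟩ :=
    aux_pushout p (LinearMap.ker p).subtype (Submodule.injective_subtype _) hikerp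
      π hπ (πC ∘ₗ ψ) hφm0
  have h_qV_surj : Function.Surjective qV := by
    intro x
    obtain ⟨v, hv⟩ := hp x
    exact ⟨jF v, by rw [h_qV_jF, hv]⟩
  -- Step A: qV splits
  have hsplit : ∃ s : Xx →ₗ[R] V, ∀ x, qV (s x) = x := by
    by_contra hns
    have hnse : ¬ ∃ s : Xx →ₗ[R] V, qV ∘ₗ s = LinearMap.id := by
      rintro ⟨s, hs⟩
      exact hns ⟨s, fun x => by rw [← LinearMap.comp_apply, hs]; rfl⟩
    obtain ⟨k', hk'⟩ := h7 _ _ _ qV hnse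
    have hgk : ∀ v, g (k' v) = qV v := fun v => by rw [← LinearMap.comp_apply, hk']
    have hmem : ∀ c, ∃ tt : Tt, f tt = (k' ∘ₗ jC) c := by
      intro c
      have h1 : k' (jC c) ∈ LinearMap.ker g := by
        rw [LinearMap.mem_ker, hgk, h_qV_jC]
      rw [← hexact] at h1
      obtain ⟨tt, htt⟩ := h1
      exact ⟨tt, htt⟩
    obtain ⟨tm, htm⟩ := aux_exists_comp_inv f hfinj (k' ∘ₗ jC) hmem
    have htm0 : ∀ c, tm c = 0 := by
      intro c
      obtain ⟨y, rfl⟩ := hπCsurj c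
      have h2 := aux_pi_hom_zero hzero (tm ∘ₗ πC) y
      rw [LinearMap.comp_apply] at h2
      exact h2
    have hk'0 : ∀ v, qV v = 0 → k' v = 0 := by
      intro v hv
      obtain ⟨c, rfl⟩ := h_ker_sub v hv
      have h3 := htm c
      rw [htm0 c, map_zero] at h3
      rw [LinearMap.comp_apply] at h3
      exact h3.symm
    obtain ⟨w, hw⟩ := aux_exists_factor qV h_qV_surj k' hk'0
    apply hgns
    refine ⟨w, ?_⟩
    apply LinearMap.ext
    intro x
    obtain ⟨v, rfl⟩ := h_qV_surj x
    rw [LinearMap.comp_apply, hw, hgk]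
    rfl
  obtain ⟨s, hs⟩ := hsplit
  -- Step B: retraction onto C and the map β = rC ∘ jF
  have hmem2 : ∀ v, ∃ c, jC c = ((LinearMap.id : V →ₗ[R] V) - s ∘ₗ qV) v := by
    intro v
    apply h_ker_sub
    rw [LinearMap.sub_apply, LinearMap.comp_apply, LinearMap.id_apply, map_sub, hs, sub_self]
  obtain ⟨rC, hrC⟩ := aux_exists_comp_inv jC h_jC_inj ((LinearMap.id : V →ₗ[R] V) - s ∘ₗ qV) hmem2
  have hipz : ∀ gg, p ((LinearMap.ker p).subtype (π gg)) = 0 := fun gg => (π gg).2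
  have hβip : ∀ gg, (rC ∘ₗ jF) ((LinearMap.ker p).subtype (π gg)) = (πC ∘ₗ ψ) gg := by
    intro gg
    apply h_jC_inj
    rw [LinearMap.comp_apply, hrC, LinearMap.sub_apply, LinearMap.comp_apply,
      LinearMap.id_apply, h_qV_jF, hipz, map_zero, sub_zero]
    exact h_push gg
  -- Step C: lift β along πC, using projectivity of the free module
  obtain ⟨βh, hβh⟩ := Module.projective_lifting_property πC (rC ∘ₗ jF) hπCsurj
  have hβh' : ∀ v, πC (βh v) = (rC ∘ₗ jF) v := fun v => by
    rw [← LinearMap.comp_apply, hβh]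
  -- Step D: the retraction χ of the inclusion of the second syzygy
  have hmem3 : ∀ gg, ∃ r : ↥(LinearMap.ker π),
      ε r = (ψ - βh ∘ₗ ((LinearMap.ker p).subtype ∘ₗ π)) gg := by
    intro gg
    have h4 : ((ψ - βh ∘ₗ ((LinearMap.ker p).subtype ∘ₗ π)) gg) ∈ LinearMap.range ε := by
      rw [← hπCker, LinearMap.sub_apply, map_sub, LinearMap.comp_apply,
        LinearMap.comp_apply, hβh', hβip, LinearMap.comp_apply, sub_self]
    obtain ⟨r, hr⟩ := h4
    exact ⟨r, hr⟩
  obtain ⟨χ, hχ⟩ := aux_exists_comp_inv ε hε _ hmem3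
  have hχρ : ∀ r : ↥(LinearMap.ker π), χ ((LinearMap.ker π).subtype r) = r := by
    intro r
    apply hε
    rw [hχ]
    have h6 : π ((LinearMap.ker π).subtype r) = 0 := r.2
    rw [LinearMap.sub_apply, LinearMap.comp_apply, LinearMap.comp_apply, h6, map_zero,
      map_zero, sub_zero, hψ]
  -- Step E: section of π, hence the syzygy is a direct summand of a free module
  obtain ⟨sπ, hsπ⟩ := aux_exists_factor π hπ
    ((LinearMap.id : (Fin m → R) →ₗ[R] (Fin m → R)) - (LinearMap.ker π).subtype ∘ₗ χ) (by
      intro gg hgg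
      have hgmem : gg ∈ LinearMap.ker π := hgg
      have h8 : χ gg = ⟨gg, hgmem⟩ := hχρ ⟨gg, hgmem⟩
      rw [LinearMap.sub_apply, LinearMap.comp_apply, LinearMap.id_apply, h8]
      exact sub_self gg)
  have hπsπ : π ∘ₗ sπ = LinearMap.id := by
    apply LinearMap.ext
    intro kk
    obtain ⟨gg, rfl⟩ := hπ kk
    rw [LinearMap.comp_apply, hsπ, LinearMap.sub_apply, LinearMap.comp_apply,
      LinearMap.id_apply, map_sub]
    have h9 : π ((LinearMap.ker π).subtype (χ gg)) = 0 := (χ gg).2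
    rw [h9, sub_zero]
    rfl
  exact Module.Projective.of_split sπ π hπsπ

end AuxLemmas


/-- If `X` is indecomposable non-projective with `pd_A X ≥ 2`,
then `Hom_A(D(A), τ_A X) ≠ 0`, where `τ_A X` is given by the almost split
sequence `0 → T → E → X → 0`. -/
theorem hom_DA_tau_ne_zero_of_pd_ge_two
    (K : Type u) [CommRing K] [IsArtinianRing K]
    (A : Type u) [Ring A] [Algebra K A] [Module.Finite K A]
    (X T E : Modc A) (hX : FinGen X) (hXi : Indec X)
    (hnp : ¬ Module.Projective Aᵐᵒᵖ X) (hpd : ¬ PdLE1 X)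
    (f : T →ₗ[Aᵐᵒᵖ] E) (g : E →ₗ[Aᵐᵒᵖ] X)
    (hars : IsAlmostSplitSeq T E X f g)
    (DA : Modc A) (hDA : IsInjCogen DA) :
    ∃ φ : DA →ₗ[Aᵐᵒᵖ] T, φ ≠ 0 := by
  classical
  by_contra hcon
  push_neg at hcon
  obtain ⟨hfinj, hgsurj, hexact, hTind, hXind, hgns, h7, h8⟩ := hars
  obtain ⟨hDAfg, hDAinj, hcog⟩ := hDA
  -- The base ring is noetherian (Hopkins–Levitzki), hence so is Aᵐᵒᵖ
  haveI : Module.Finite K Aᵐᵒᵖ := Module.Finite.equiv (MulOpposite.opLinearEquiv K)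
  haveI hKn : IsNoetherian K Aᵐᵒᵖ := aux_artinian_noetherian K Aᵐᵒᵖ
  haveI : IsNoetherianRing Aᵐᵒᵖ := isNoetherian_of_tower K hKn
  haveI : Module.Finite Aᵐᵒᵖ X := hX
  obtain ⟨n, p, hp, hproj⟩ := aux_main (R := Aᵐᵒᵖ) (Q := DA) hDAinj f g hfinj hexact
    (fun hsp => hgns hsp)
    (fun V _ _ h hn => h7 (ModuleCat.of Aᵐᵒᵖ V) h (fun hh => hn hh))
    (fun M _ _ hM => hcog (ModuleCat.of Aᵐᵒᵖ M) hM)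
    hcon
  exact hpd ⟨ModuleCat.of Aᵐᵒᵖ ↥(LinearMap.ker p), ModuleCat.of Aᵐᵒᵖ (Fin n → Aᵐᵒᵖ),
    (LinearMap.ker p).subtype, p, hproj,
    (inferInstance : Module.Projective Aᵐᵒᵖ (Fin n → Aᵐᵒᵖ)),
    Submodule.injective_subtype _, hp, Submodule.range_subtype _⟩
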